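/- arXiv:1611.07279 — 3 statements merged into one kernel-verified Lean document; each statement's English description precedes it below -/
import Mathlib

section
/- Let R be a regular local ring of Krull dimension 3 whose maximal ideal m is generated by elements f, g, h. Then the ideals (f,g) and (h,g) are distinct, and the set of minimal prime ideals of R over the ideal (fh, g) is exactly {(f,g), (h,g)}. -/
open IsLocalRing Ideal

lemma NCI.artinian_quot_maximal {R : Type*} [CommRing R] {m : Ideal R} (hm : m.IsMaximal) :
    IsArtinian R (R ⧸ m) := by
  have hbt : ∀ N : Submodule R (R ⧸ m), N = ⊥ ∨ N = ⊤ := by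
    intro N
    by_cases hN : N = ⊥
    · exact Or.inl hN
    · right
      obtain ⟨x, hxN, hx0⟩ := Submodule.exists_mem_ne_zero_of_ne_bot hN
      rw [eq_top_iff]
      rintro y -
      obtain ⟨t, rfl⟩ := Ideal.Quotient.mk_surjective x
      obtain ⟨r, rfl⟩ := Ideal.Quotient.mk_surjective y
      have ht : t ∉ m := fun h => hx0 (Ideal.Quotient.eq_zero_iff_mem.mpr h)
      obtain ⟨d, c, hc, hdc⟩ := hm.exists_inv ht
      have : (Ideal.Quotient.mk m) r = (r * d) • (Ideal.Quotient.mk m) t := by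
        rw [Algebra.smul_def]
        rw [show (algebraMap R (R ⧸ m)) (r * d) = Ideal.Quotient.mk m (r * d) from rfl,
          ← _root_.map_mul, Ideal.Quotient.mk_eq_mk_iff_sub_mem]
        have : r - r * d * t = r * c := by
          have : c = 1 - d * t := by linear_combination hdc
          rw [this]; ring
        rw [this]
        exact Ideal.mul_mem_left _ _ hc
      rw [this]
      exact N.smul_mem _ hxN
  rw [isArtinian_iff]
  have acc_bot : Acc (· < ·) (⊥ : Submodule R (R ⧸ m)) :=
    Acc.intro _ (fun y hy => absurd hy (by simp))
  constructor
  intro N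
  rcases hbt N with rfl | rfl
  · exact acc_bot
  · refine Acc.intro _ (fun y hy => ?_)
    rcases hbt y with rfl | rfl
    · exact acc_bot
    · exact absurd hy (lt_irrefl _)

lemma NCI.isArtinian_of_annihilated {R : Type*} [CommRing R] {M : Type*} [AddCommGroup M] [Module R M]
    {m : Ideal R} (hm : m.IsMaximal) [Module.Finite R M]
    (hann : ∀ c ∈ m, ∀ x : M, c • x = (0 : M)) : IsArtinian R M := by
  have hsing : ∀ x : M, IsArtinian R ↥(Submodule.span R {x}) := by
    intro x
    have hker : m ≤ LinearMap.ker (LinearMap.toSpanSingleton R M x) := by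
      intro c hc
      simpa [LinearMap.mem_ker, LinearMap.toSpanSingleton_apply] using hann c hc x
    have e : (R ⧸ LinearMap.ker (LinearMap.toSpanSingleton R M x)) ≃ₗ[R]
        ↥(Submodule.span R {x}) := by
      rw [LinearMap.span_singleton_eq_range]
      exact LinearMap.quotKerEquivRange _
    by_cases htop : LinearMap.ker (LinearMap.toSpanSingleton R M x) = ⊤
    · haveI : Subsingleton (R ⧸ LinearMap.ker (LinearMap.toSpanSingleton R M x)) := by
        rw [htop]
        exact Submodule.Quotient.subsingleton_iff.mpr rfl
      haveI : Subsingleton ↥(Submodule.span R {x}) := e.symm.toEquiv.subsingleton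
      haveI : Finite ↥(Submodule.span R {x}) := Finite.of_subsingleton
      infer_instance
    · have hkm : LinearMap.ker (LinearMap.toSpanSingleton R M x) = m :=
        (hm.eq_of_le htop hker).symm
      have := NCI.artinian_quot_maximal hm
      rw [hkm] at e
      exact isArtinian_of_linearEquiv e
  obtain ⟨s, hs⟩ := Module.Finite.fg_top (R := R) (M := M)
  have htop : (⊤ : Submodule R M) = ⨆ x : (s : Set M), Submodule.span R {(x : M)} := by
    rw [← hs, Submodule.span_eq_iSup_of_singleton_spans, iSup_subtype']
  have : IsArtinian R ↥(⨆ x : (s : Set M), Submodule.span R {(x : M)}) := by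
    haveI : ∀ x : (s : Set M), IsArtinian R ↥(Submodule.span R {(x : M)}) := fun x => hsing x
    infer_instance
  rw [← htop] at this
  exact isArtinian_of_linearEquiv Submodule.topEquiv

lemma NCI.isArtinian_quotient_of_pow_le {R : Type*} [CommRing R] [IsNoetherianRing R] {m : Ideal R}
    (hm : m.IsMaximal) (k : ℕ) :
    ∀ J : Ideal R, m ^ k ≤ J → IsArtinian R (R ⧸ J) := by
  induction k with
  | zero =>
    intro J hJ
    rw [pow_zero, Ideal.one_eq_top, top_le_iff] at hJ
    haveI : Subsingleton (R ⧸ J) :=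
      Submodule.Quotient.subsingleton_iff.mpr (by rw [hJ])
    haveI : Finite (R ⧸ J) := Finite.of_subsingleton
    infer_instance
  | succ k ih =>
    intro J hJ
    have hart' : IsArtinian R (R ⧸ (J ⊔ m ^ k)) := ih _ le_sup_right
    set S : Submodule R (R ⧸ J) :=
      Submodule.map (Submodule.mkQ J) (J ⊔ m ^ k) with hSdef
    rw [isArtinian_iff_submodule_quotient S]
    constructor
    · haveI : Module.Finite R ↥S := Module.Finite.iff_fg.mpr (IsNoetherian.noetherian S)
      apply NCI.isArtinian_of_annihilated hm
      intro c hc x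
      obtain ⟨t, ht, hmk⟩ := x.2
      apply Subtype.ext
      show c • (x : R ⧸ J) = 0
      rw [← hmk, ← map_smul, smul_eq_mul]
      rw [Submodule.mkQ_apply, Submodule.Quotient.mk_eq_zero]
      have : c * t ∈ m * (J ⊔ m ^ k) := Ideal.mul_mem_mul hc ht
      refine Set.mem_of_mem_of_subset this ?_
      have : m * (J ⊔ m ^ k) ≤ J := by
        rw [Ideal.mul_sup]
        apply sup_le
        · exact le_trans Ideal.mul_le_right le_rfl
        · rw [← pow_succ']
          exact hJ
      exact this
    · exact isArtinian_of_linearEquiv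
        (Submodule.quotientQuotientEquivQuotient J (J ⊔ m ^ k) le_sup_left).symm

lemma NCI.pit_local {R : Type*} [CommRing R] [IsNoetherianRing R] [IsLocalRing R] {a : R}
    (hmin : maximalIdeal R ∈ (Ideal.span {a}).minimalPrimes)
    {q' q : Ideal R} (hq' : q'.IsPrime) (hq : q.IsPrime)
    (h1 : q' < q) (h2 : q < maximalIdeal R) : False := by
  haveI := hq
  have hm : (maximalIdeal R).IsMaximal := maximalIdeal.isMaximal R
  have haM : a ∈ maximalIdeal R := hmin.1.2 (Ideal.subset_span rfl)
  have haq : a ∉ q := by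
    intro haq
    have hle : maximalIdeal R ≤ q :=
      hmin.2 ⟨hq, by rwa [Ideal.span_le, Set.singleton_subset_iff]⟩ h2.le
    exact (lt_irrefl _ (lt_of_le_of_lt hle h2))
  have hrad : (Ideal.span {a}).radical = maximalIdeal R := by
    rw [Ideal.radical_eq_sInf]
    apply le_antisymm
    · exact sInf_le ⟨hmin.1.2, hmin.1.1⟩
    · apply le_sInf
      rintro P ⟨hle, hP⟩
      have hPm : P ≤ maximalIdeal R := le_maximalIdeal hP.ne_top
      exact hmin.2 ⟨hP, hle⟩ hPm
  obtain ⟨k, hk⟩ := Ideal.exists_pow_le_of_le_radical_of_fg (le_of_eq hrad.symm)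
    (IsNoetherian.noetherian _)
  haveI hartin : IsArtinian R (R ⧸ (Ideal.span {a} : Ideal R)) :=
    NCI.isArtinian_quotient_of_pow_le hm k _ hk
  set T := Localization.AtPrime q with hTdef
  set φ := algebraMap R T with hφdef
  set I : ℕ → Ideal R := fun n => Ideal.comap φ ((Ideal.map φ q) ^ n) with hIdef
  have hIdesc : ∀ {i j : ℕ}, i ≤ j → I j ≤ I i :=
    fun hij => Ideal.comap_mono (Ideal.pow_le_pow_right hij)
  set F : ℕ →o (Submodule R (R ⧸ (Ideal.span {a} : Ideal R)))ᵒᵈ :=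
    ⟨fun n => Submodule.map (Submodule.mkQ _) (I n),
     fun i j hij => Submodule.map_mono (hIdesc hij)⟩ with hFdef
  obtain ⟨N, hN⟩ := IsArtinian.monotone_stabilizes F
  have hmapeq : (Submodule.map (Submodule.mkQ (Ideal.span {a} : Ideal R)) (I N)) =
      Submodule.map (Submodule.mkQ (Ideal.span {a} : Ideal R)) (I (N + 1)) :=
    hN (N + 1) (Nat.le_succ N)
  have hstep2 : I N ≤ I (N + 1) ⊔ (maximalIdeal R) • (I N) := by
    intro x hx
    have hxm : Submodule.mkQ (Ideal.span {a} : Ideal R) x ∈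
        Submodule.map (Submodule.mkQ (Ideal.span {a} : Ideal R)) (I (N + 1)) := by
      rw [← hmapeq]
      exact Submodule.mem_map_of_mem hx
    obtain ⟨y, hy, hxy⟩ := hxm
    have hsub : x - y ∈ (Ideal.span {a} : Ideal R) := by
      rw [← Submodule.Quotient.eq]
      exact (hxy.symm : _)
    obtain ⟨r, hr⟩ := Ideal.mem_span_singleton'.mp hsub
    have hra : r * a ∈ I N := by
      rw [hr]
      exact sub_mem hx (hIdesc (Nat.le_succ N) hy)
    have hrIN : r ∈ I N := by
      have hu : IsUnit (φ a) :=
        (IsLocalization.AtPrime.isUnit_to_map_iff T q a).mpr haq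
      have hmem : φ (r * a) ∈ (Ideal.map φ q) ^ N := hra
      rw [_root_.map_mul, mul_comm] at hmem
      exact (Ideal.unit_mul_mem_iff_mem _ hu).mp hmem
    rw [Submodule.mem_sup]
    refine ⟨y, hy, r * a, ?_, by rw [hr]; ring⟩
    rw [Ideal.smul_eq_mul, mul_comm r a]
    exact Ideal.mul_mem_mul haM hrIN
  -- Nakayama to get I N = I (N+1)
  set π := Submodule.mkQ (I (N + 1) : Submodule R R) with hπdef
  set Nsub : Submodule R (R ⧸ (I (N + 1) : Submodule R R)) := Submodule.map π (I N)
    with hNsubdef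
  have hNle : Nsub ≤ (maximalIdeal R) • Nsub := by
    rintro _ ⟨x, hx, rfl⟩
    rcases Submodule.mem_sup.mp (hstep2 hx) with ⟨y, hy, z, hz, hyz⟩
    have hπx : π x = π z := by
      rw [← hyz]
      rw [map_add]
      have : π y = 0 := by
        rw [hπdef, Submodule.mkQ_apply, Submodule.Quotient.mk_eq_zero]
        exact hy
      rw [this, zero_add]
    rw [hπx]
    have : π z ∈ Submodule.map π ((maximalIdeal R) • (I N)) := Submodule.mem_map_of_mem hz
    rwa [Submodule.map_smul''] at this
  have hbot : Nsub = ⊥ :=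
    Submodule.eq_bot_of_le_smul_of_le_jacobson_bot (maximalIdeal R) Nsub
      (IsNoetherian.noetherian Nsub) hNle
      (by rw [IsLocalRing.jacobson_eq_maximalIdeal ⊥ bot_ne_top])
  have hIeq : I N = I (N + 1) := by
    apply le_antisymm _ (hIdesc (Nat.le_succ N))
    intro x hx
    have : π x ∈ Nsub := Submodule.mem_map_of_mem hx
    rw [hbot, Submodule.mem_bot] at this
    rwa [hπdef, Submodule.mkQ_apply, Submodule.Quotient.mk_eq_zero] at this
  -- transfer to the localization
  have hTeq : (Ideal.map φ q) ^ N = (Ideal.map φ q) ^ (N + 1) := by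
    have := congrArg (Ideal.map φ) hIeq
    rwa [IsLocalization.map_comap q.primeCompl T, IsLocalization.map_comap q.primeCompl T]
      at this
  haveI : IsNoetherianRing T :=
    IsLocalization.isNoetherianRing q.primeCompl T inferInstance
  have hmT : Ideal.map φ q = maximalIdeal T := Localization.AtPrime.map_eq_maximalIdeal
  have hbotT : (Ideal.map φ q) ^ N = ⊥ := by
    apply Submodule.eq_bot_of_le_smul_of_le_jacobson_bot (maximalIdeal T) _
      (IsNoetherian.noetherian _)
    · rw [← hmT, Ideal.smul_eq_mul]
      calc (Ideal.map φ q) ^ N = (Ideal.map φ q) ^ (N + 1) := hTeq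
        _ = (Ideal.map φ q) * (Ideal.map φ q) ^ N := by rw [pow_succ, mul_comm]
        _ ≤ _ := le_rfl
    · rw [IsLocalRing.jacobson_eq_maximalIdeal ⊥ bot_ne_top]
  -- contradiction with the prime q'
  have hdisj : Disjoint (q.primeCompl : Set R) (q' : Set R) := by
    rw [Set.disjoint_left]
    intro x hx hx'
    exact hx (h1.le hx')
  have hq'T : (Ideal.map φ q').IsPrime :=
    IsLocalization.isPrime_of_isPrime_disjoint q.primeCompl T q' hq' hdisj
  have hle : Ideal.map φ q ≤ Ideal.map φ q' :=
    hq'T.le_of_pow_le (by rw [hbotT]; exact bot_le)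
  have hqq' : q ≤ q' := by
    have hcomap : Ideal.comap φ (Ideal.map φ q') = q' :=
      IsLocalization.comap_map_of_isPrime_disjoint q.primeCompl T hq' hdisj
    calc q ≤ Ideal.comap φ (Ideal.map φ q) := Ideal.le_comap_map
      _ ≤ Ideal.comap φ (Ideal.map φ q') := Ideal.comap_mono hle
      _ = q' := hcomap
  exact (h1.trans_le hqq').false

lemma NCI.pit {R : Type*} [CommRing R] [IsNoetherianRing R] {a : R} {p : Ideal R}
    (hmin : p ∈ (Ideal.span {a}).minimalPrimes)
    {q' q : Ideal R} (hq' : q'.IsPrime) (hq : q.IsPrime)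
    (h1 : q' < q) (h2 : q < p) : False := by
  haveI hp : p.IsPrime := hmin.1.1
  set T := Localization.AtPrime p with hTdef
  set φ := algebraMap R T with hφdef
  haveI : IsNoetherianRing T :=
    IsLocalization.isNoetherianRing p.primeCompl T inferInstance
  have hmT : Ideal.map φ p = maximalIdeal T := Localization.AtPrime.map_eq_maximalIdeal
  have hcm : Ideal.comap φ (maximalIdeal T) = p := Localization.AtPrime.comap_maximalIdeal
  have hdisj : ∀ {J : Ideal R}, J.IsPrime → J ≤ p → Disjoint (p.primeCompl : Set R) (J : Set R) := by
    intro J _ hJp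
    rw [Set.disjoint_left]
    intro x hx hx'
    exact hx (hJp hx')
  have hmin' : maximalIdeal T ∈ (Ideal.span {φ a}).minimalPrimes := by
    refine ⟨⟨(maximalIdeal.isMaximal T).isPrime, ?_⟩, ?_⟩
    · rw [Ideal.span_le, Set.singleton_subset_iff]
      rw [← hmT]
      exact Ideal.mem_map_of_mem φ (hmin.1.2 (Ideal.subset_span rfl))
    · rintro P ⟨hP, hsp⟩ hPle
      have hs1 : Ideal.span {a} ≤ Ideal.comap φ P := by
        rw [Ideal.span_le, Set.singleton_subset_iff]
        exact hsp (Ideal.subset_span rfl)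
      have hs2 : Ideal.comap φ P ≤ p := by
        have := Ideal.comap_mono (f := φ) hPle
        rwa [hcm] at this
      haveI : (Ideal.comap φ P).IsPrime := Ideal.IsPrime.comap (F := R →+* T) (K := P) (hK := hP) φ
      have heq : Ideal.comap φ P = p := le_antisymm hs2 (hmin.2 ⟨inferInstance, hs1⟩ hs2)
      have : maximalIdeal T = P := by
        calc maximalIdeal T = Ideal.map φ p := hmT.symm
          _ = Ideal.map φ (Ideal.comap φ P) := by rw [heq]
          _ = P := IsLocalization.map_comap p.primeCompl T P
      exact le_of_eq this
  have hq'T : (Ideal.map φ q').IsPrime :=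
    IsLocalization.isPrime_of_isPrime_disjoint p.primeCompl T q' hq' (hdisj hq' (h1.trans h2).le)
  have hqT : (Ideal.map φ q).IsPrime :=
    IsLocalization.isPrime_of_isPrime_disjoint p.primeCompl T q hq (hdisj hq h2.le)
  have hcq' : Ideal.comap φ (Ideal.map φ q') = q' :=
    IsLocalization.comap_map_of_isPrime_disjoint p.primeCompl T hq' (hdisj hq' (h1.trans h2).le)
  have hcq : Ideal.comap φ (Ideal.map φ q) = q :=
    IsLocalization.comap_map_of_isPrime_disjoint p.primeCompl T hq (hdisj hq h2.le)
  have hlt1 : Ideal.map φ q' < Ideal.map φ q := by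
    refine lt_of_le_of_ne (Ideal.map_mono h1.le) (fun e => ?_)
    rw [← hcq', ← hcq, e] at h1
    exact h1.false
  have hlt2 : Ideal.map φ q < maximalIdeal T := by
    refine lt_of_le_of_ne (by rw [← hmT]; exact Ideal.map_mono h2.le) (fun e => ?_)
    have := congrArg (Ideal.comap φ) e
    rw [hcq, hcm] at this
    exact h2.ne this
  exact NCI.pit_local hmin' hq'T hqT hlt1 hlt2

lemma NCI.pit_quot {R : Type*} [CommRing R] [IsNoetherianRing R] {a : R} {p q r : Ideal R}
    (hp : p.IsPrime) (hq : q.IsPrime)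
    (hr : r ∈ (p ⊔ Ideal.span {a}).minimalPrimes)
    (h1 : p < q) (h2 : q < r) : False := by
  have hrp : r.IsPrime := hr.1.1
  set π := Ideal.Quotient.mk p with hπdef
  have hsurj : Function.Surjective π := Ideal.Quotient.mk_surjective
  have hkerp : RingHom.ker π = p := Ideal.mk_ker
  have hpr : p ≤ r := le_trans le_sup_left hr.1.2
  have har : a ∈ r := (le_trans le_sup_right hr.1.2) (Ideal.subset_span rfl)
  have hqprime : (Ideal.map π q).IsPrime :=
    Ideal.map_isPrime_of_surjective hsurj (by rw [hkerp]; exact h1.le)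
  have hrprime : (Ideal.map π r).IsPrime :=
    Ideal.map_isPrime_of_surjective hsurj (by rw [hkerp]; exact hpr)
  haveI : IsDomain (R ⧸ p) := Ideal.Quotient.isDomain p
  have hcomap : ∀ J : Ideal R, p ≤ J → Ideal.comap π (Ideal.map π J) = J := by
    intro J hJ
    rw [Ideal.comap_map_of_surjective π hsurj, ← RingHom.ker_eq_comap_bot, hkerp,
      sup_eq_left.mpr hJ]
  have hminB : Ideal.map π r ∈ (Ideal.span {π a}).minimalPrimes := by
    refine ⟨⟨hrprime, ?_⟩, ?_⟩
    · rw [Ideal.span_le, Set.singleton_subset_iff]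
      exact Ideal.mem_map_of_mem π har
    · rintro P ⟨hP, hsp⟩ hPle
      haveI : (Ideal.comap π P).IsPrime :=
        Ideal.IsPrime.comap (F := R →+* R ⧸ p) (K := P) (hK := hP) π
      have hP1 : p ⊔ Ideal.span {a} ≤ Ideal.comap π P := by
        apply sup_le
        · intro x hx
          show π x ∈ P
          rw [show π x = 0 from Ideal.Quotient.eq_zero_iff_mem.mpr hx]
          exact P.zero_mem
        · rw [Ideal.span_le, Set.singleton_subset_iff]
          exact hsp (Ideal.subset_span rfl)
      have hP2 : Ideal.comap π P ≤ r := by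
        have := Ideal.comap_mono (f := π) hPle
        rwa [hcomap r hpr] at this
      have : r ≤ Ideal.comap π P := hr.2 ⟨inferInstance, hP1⟩ hP2
      calc Ideal.map π r ≤ Ideal.map π (Ideal.comap π P) := Ideal.map_mono this
        _ = P := Ideal.map_comap_of_surjective π hsurj P
  have hlt1 : (⊥ : Ideal (R ⧸ p)) < Ideal.map π q := by
    rw [bot_lt_iff_ne_bot]
    intro e
    rw [Ideal.map_eq_bot_iff_le_ker, hkerp] at e
    exact h1.not_ge e
  have hlt2 : Ideal.map π q < Ideal.map π r := by
    refine lt_of_le_of_ne (Ideal.map_mono h2.le) (fun e => ?_)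
    have := congrArg (Ideal.comap π) e
    rw [hcomap q h1.le, hcomap r hpr] at this
    exact h2.ne this
  exact NCI.pit hminB Ideal.bot_prime hqprime hlt1 hlt2

lemma NCI.push {R : Type*} [CommRing R] [IsNoetherianRing R] {p q r : Ideal R}
    (hp : p.IsPrime) (hq : q.IsPrime) (hr : r.IsPrime)
    (h1 : p < q) (h2 : q < r) {a : R} (ha : a ∈ r) :
    ∃ q' : Ideal R, q'.IsPrime ∧ p < q' ∧ q' < r ∧ a ∈ q' := by
  by_cases hap : a ∈ p
  · exact ⟨q, hq, h1, h2, h1.le hap⟩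
  · have hle : p ⊔ Ideal.span {a} ≤ r := by
      apply sup_le (h1.trans h2).le
      rw [Ideal.span_le, Set.singleton_subset_iff]
      exact ha
    obtain ⟨q', hq'min, hq'r⟩ := Ideal.exists_minimalPrimes_le (J := r) hle
    have hq'p : q'.IsPrime := hq'min.1.1
    have haq' : a ∈ q' := (le_trans le_sup_right hq'min.1.2) (Ideal.subset_span rfl)
    have hpq' : p < q' := lt_of_le_of_ne (le_trans le_sup_left hq'min.1.2)
      (fun e => hap (e ▸ haq'))
    refine ⟨q', hq'p, hpq', lt_of_le_of_ne hq'r (fun e => ?_), haq'⟩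
    subst e
    exact NCI.pit_quot hp hq hq'min h1 h2

lemma NCI.exists_chain {R : Type*} [CommRing R] [IsLocalRing R]
    (hdim : ringKrullDim R = 3) :
    ∃ A B C : Ideal R, A.IsPrime ∧ B.IsPrime ∧ C.IsPrime ∧
      A < B ∧ B < C ∧ C < maximalIdeal R := by
  have hns : ∃ s : LTSeries (PrimeSpectrum R), 3 ≤ s.length := by
    by_contra hc
    push_neg at hc
    have h2 : ringKrullDim R ≤ ((2 : ℕ) : WithBot ℕ∞) := by
      rw [ringKrullDim, Order.krullDim]
      apply iSup_le
      intro p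
      have := Nat.lt_succ_iff.mp (hc p)
      exact_mod_cast this
    rw [hdim] at h2
    norm_num at h2
  obtain ⟨s, hs⟩ := hns
  have hi : ∀ i j : Fin (s.length + 1), i < j → (s i).asIdeal < (s j).asIdeal := by
    intro i j hij
    exact (PrimeSpectrum.asIdeal_lt_asIdeal _ _).mpr (s.strictMono hij)
  set P0 := s ⟨0, by omega⟩
  set P1 := s ⟨1, by omega⟩
  set P2 := s ⟨2, by omega⟩
  set P3 := s ⟨3, by omega⟩
  have h01 : P0.asIdeal < P1.asIdeal := hi _ _ (by simp [Fin.lt_def])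
  have h12 : P1.asIdeal < P2.asIdeal := hi _ _ (by simp [Fin.lt_def])
  have h23 : P2.asIdeal < P3.asIdeal := hi _ _ (by simp [Fin.lt_def])
  have h3m : P3.asIdeal ≤ maximalIdeal R := le_maximalIdeal P3.2.ne_top
  by_cases he : P3.asIdeal = maximalIdeal R
  · exact ⟨P0.asIdeal, P1.asIdeal, P2.asIdeal, P0.2, P1.2, P2.2, h01, h12, he ▸ h23⟩
  · exact ⟨P1.asIdeal, P2.asIdeal, P3.asIdeal, P1.2, P2.2, P3.2, h12, h23,
      lt_of_le_of_ne h3m he⟩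

lemma NCI.radical_ne_maximalIdeal {R : Type*} [CommRing R] [IsLocalRing R] [IsNoetherianRing R]
    (hdim : ringKrullDim R = 3) (a b : R)
    (hab : Ideal.span {a, b} ≤ maximalIdeal R) :
    (Ideal.span {a, b}).radical ≠ maximalIdeal R := by
  intro hrad
  obtain ⟨A, B, C, hA, hB, hC, h1, h2, h3⟩ := NCI.exists_chain hdim
  have hmp : (maximalIdeal R).IsPrime := (maximalIdeal.isMaximal R).isPrime
  have ham : a ∈ maximalIdeal R := hab (Ideal.subset_span (by simp))
  have hbm : b ∈ maximalIdeal R := hab (Ideal.subset_span (by simp))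
  obtain ⟨q₂, hq₂, hBq₂, hq₂m, haq₂⟩ := NCI.push hB hC hmp h2 h3 ham
  obtain ⟨q₁, hq₁, hAq₁, hq₁q₂, haq₁⟩ := NCI.push hA hB hq₂ h1 hBq₂ haq₂
  have hminm : maximalIdeal R ∈ (q₁ ⊔ Ideal.span {b}).minimalPrimes := by
    refine ⟨⟨hmp, ?_⟩, ?_⟩
    · apply sup_le (hq₁q₂.trans hq₂m).le
      rw [Ideal.span_le, Set.singleton_subset_iff]
      exact hbm
    · rintro P ⟨hP, hsp⟩ hPle
      have habP : Ideal.span {a, b} ≤ P := by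
        rw [Ideal.span_le]
        rintro u (rfl | rfl)
        · exact (le_sup_left.trans hsp) haq₁
        · exact (le_sup_right.trans hsp) (Ideal.subset_span rfl)
      calc maximalIdeal R = (Ideal.span {a, b}).radical := hrad.symm
        _ ≤ P.radical := Ideal.radical_mono habP
        _ = P := hP.radical
  exact NCI.pit_quot hq₁ hq₂ hminm hq₁q₂ hq₂m

lemma NCI.prime_span_pair {R : Type*} [CommRing R] [IsLocalRing R] [IsNoetherianRing R]
    (x y z : R) (hdim : ringKrullDim R = 3)
    (hm : maximalIdeal R = Ideal.span {x, y, z}) :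
    (Ideal.span {x, y}).IsPrime ∧ z ∉ Ideal.span {x, y} := by
  set I := Ideal.span {x, y} with hIdef
  have hxm : x ∈ maximalIdeal R := by rw [hm]; exact Ideal.subset_span (by simp)
  have hym : y ∈ maximalIdeal R := by rw [hm]; exact Ideal.subset_span (by simp)
  have hzm : z ∈ maximalIdeal R := by rw [hm]; exact Ideal.subset_span (by simp)
  have hIm : I ≤ maximalIdeal R := by
    rw [hIdef, Ideal.span_le]
    rintro u (rfl | rfl) <;> assumption
  have hzrad : z ∉ I.radical := by
    intro hz
    apply NCI.radical_ne_maximalIdeal hdim x y hIm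
    apply le_antisymm
    · calc I.radical ≤ (maximalIdeal R).radical := Ideal.radical_mono hIm
        _ = maximalIdeal R := ((maximalIdeal.isMaximal R).isPrime).radical
    · rw [hm, Ideal.span_le]
      rintro u (rfl | rfl | rfl)
      · exact Ideal.le_radical (Ideal.subset_span (by simp))
      · exact Ideal.le_radical (Ideal.subset_span (by simp))
      · exact hz
  set π := Ideal.Quotient.mk I with hπdef
  have hInetop : I ≠ ⊤ :=
    fun e => (maximalIdeal.isMaximal R).ne_top (top_le_iff.mp (by rw [← e]; exact hIm))
  haveI : Nontrivial (R ⧸ I) := Ideal.Quotient.nontrivial_iff.mpr hInetop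
  haveI : IsLocalRing (R ⧸ I) := IsLocalRing.of_surjective' π Ideal.Quotient.mk_surjective
  have honem : (1 : R) ∉ maximalIdeal R :=
    fun h => (maximalIdeal.isMaximal R).ne_top ((Ideal.eq_top_iff_one _).mpr h)
  have hmax : maximalIdeal (R ⧸ I) = Ideal.span {π z} := by
    apply le_antisymm
    · intro t ht
      obtain ⟨t₀, rfl⟩ := Ideal.Quotient.mk_surjective t
      have ht₀ : t₀ ∈ maximalIdeal R := by
        by_contra hcon
        exact (IsLocalRing.mem_maximalIdeal _).mp ht
          ((not_not.mp (fun hh => hcon hh)).map π)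
      rw [hm] at ht₀
      have hmem : π t₀ ∈ Ideal.map π (Ideal.span {x, y, z}) := Ideal.mem_map_of_mem π ht₀
      rw [Ideal.map_span] at hmem
      refine (Ideal.span_le.mpr ?_ : Ideal.span (π '' {x, y, z}) ≤ Ideal.span {π z}) hmem
      rintro u ⟨w, hw, rfl⟩
      have hw' : w = z ∨ w ∈ I := by
        rcases hw with rfl | rfl | rfl
        · exact Or.inr (Ideal.subset_span (by simp))
        · exact Or.inr (Ideal.subset_span (by simp))
        · exact Or.inl rfl
      rcases hw' with rfl | hwI
      · exact Ideal.subset_span rfl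
      · rw [show π w = 0 from Ideal.Quotient.eq_zero_iff_mem.mpr hwI]
        exact Ideal.zero_mem _
    · rw [Ideal.span_le, Set.singleton_subset_iff]
      rw [SetLike.mem_coe, IsLocalRing.mem_maximalIdeal, mem_nonunits_iff]
      intro hu
      obtain ⟨c, hc⟩ := hu.exists_right_inv
      obtain ⟨w, rfl⟩ := Ideal.Quotient.mk_surjective c
      have : z * w - 1 ∈ I := by
        rw [← Ideal.Quotient.eq_zero_iff_mem]
        rw [map_sub, _root_.map_mul, map_one]
        show π z * π w - 1 = 0
        rw [hc, sub_self]
      apply honem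
      have h1 : (1 : R) = z * w - (z * w - 1) := by ring
      rw [h1]
      exact sub_mem (Ideal.mul_mem_right _ _ hzm) (hIm this)
  have hznil : ¬IsNilpotent (π z) := by
    rintro ⟨n, hn⟩
    apply hzrad
    refine ⟨n, ?_⟩
    rw [← Ideal.Quotient.eq_zero_iff_mem, map_pow]
    exact hn
  have hmAnetop : maximalIdeal (R ⧸ I) ≠ ⊤ := (maximalIdeal.isMaximal _).ne_top
  have hbot : (⨅ n : ℕ, (maximalIdeal (R ⧸ I)) ^ n) = ⊥ :=
    Ideal.iInf_pow_eq_bot_of_isLocalRing _ hmAnetop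
  have hkey : ∀ c : R ⧸ I, c ≠ 0 → ∃ (u : R ⧸ I) (n : ℕ), IsUnit u ∧ c = u * (π z) ^ n := by
    intro c hc
    have hex : ∃ n, c ∉ (maximalIdeal (R ⧸ I)) ^ n := by
      by_contra hcon
      push_neg at hcon
      exact hc (by rw [← Submodule.mem_bot (R := R ⧸ I), ← hbot]; exact Submodule.mem_iInf _ |>.mpr hcon)
    classical
    have hn₀pos : Nat.find hex ≠ 0 := by
      intro e
      have hsp := Nat.find_spec hex
      rw [e, pow_zero, Ideal.one_eq_top] at hsp
      exact hsp trivial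
    obtain ⟨n, hn⟩ : ∃ n, Nat.find hex = n + 1 :=
      ⟨Nat.find hex - 1, (Nat.succ_pred_eq_of_pos (Nat.pos_of_ne_zero hn₀pos)).symm⟩
    have hcn : c ∈ (maximalIdeal (R ⧸ I)) ^ n := by
      by_contra hcon
      have := Nat.find_min' hex hcon
      omega
    have hcn1 : c ∉ (maximalIdeal (R ⧸ I)) ^ (n + 1) := hn ▸ Nat.find_spec hex
    rw [hmax, Ideal.span_singleton_pow] at hcn
    obtain ⟨u, hu⟩ := Ideal.mem_span_singleton'.mp hcn
    refine ⟨u, n, ?_, hu.symm⟩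
    by_contra hucon
    have humem : u ∈ maximalIdeal (R ⧸ I) := (IsLocalRing.mem_maximalIdeal _).mpr hucon
    rw [hmax] at humem
    obtain ⟨v, hv⟩ := Ideal.mem_span_singleton'.mp humem
    apply hcn1
    rw [hmax, Ideal.span_singleton_pow, Ideal.mem_span_singleton']
    exact ⟨v, by rw [← hu, ← hv]; ring⟩
  haveI : NoZeroDivisors (R ⧸ I) := by
    constructor
    intro a b hab
    by_contra hcon
    push_neg at hcon
    obtain ⟨ha, hb⟩ := hcon
    obtain ⟨u, n, hu, rfl⟩ := hkey a ha
    obtain ⟨v, k, hv, rfl⟩ := hkey b hb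
    have : (π z) ^ (n + k) = 0 := by
      have h1 : (u * v) * (π z) ^ (n + k) = 0 := by
        rw [← hab]; ring
      exact ((hu.mul hv).mul_right_eq_zero).mp h1
    exact hznil ⟨n + k, this⟩
  haveI : IsDomain (R ⧸ I) := NoZeroDivisors.to_isDomain _
  exact ⟨(Ideal.Quotient.isDomain_iff_prime I).mp inferInstance,
    fun hz => hzrad (Ideal.le_radical hz)⟩

/-- Let `R` be a regular local ring of Krull dimension 3 whose maximal ideal `m` is generated
by elements `f, g, h`. Then the ideals `(f,g)` and `(h,g)` are distinct, and the set of
minimal prime ideals of `R` over the ideal `(fh, g)` is exactly `{(f,g), (h,g)}`. -/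
theorem minimalPrimes_of_nodal_curve_ideal
    (R : Type*) [CommRing R] [IsLocalRing R] [IsNoetherianRing R]
    (f g h : R) (hdim : ringKrullDim R = 3)
    (hm : IsLocalRing.maximalIdeal R = Ideal.span {f, g, h}) :
    (Ideal.span {f, g} : Ideal R) ≠ Ideal.span {h, g} ∧
    (Ideal.span {f * h, g} : Ideal R).minimalPrimes =
      {Ideal.span {f, g}, Ideal.span {h, g}} := by
  obtain ⟨hP, hhP⟩ := NCI.prime_span_pair f g h hdim hm
  obtain ⟨hQ, hfQ⟩ := NCI.prime_span_pair h g f hdim (by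
    rw [hm]; congr 1; ext u; simp; tauto)
  set P := Ideal.span {f, g} with hPdef
  set Q := Ideal.span {h, g} with hQdef
  have hfP : f ∈ P := Ideal.subset_span (by simp)
  have hgP : g ∈ P := Ideal.subset_span (by simp)
  have hhQ : h ∈ Q := Ideal.subset_span (by simp)
  have hgQ : g ∈ Q := Ideal.subset_span (by simp)
  have hne : P ≠ Q := fun e => hhP (e ▸ hhQ)
  set J := Ideal.span {f * h, g} with hJdef
  have hJP : J ≤ P := by
    rw [hJdef, Ideal.span_le]
    rintro u (rfl | rfl)
    · exact Ideal.mul_mem_right _ _ hfP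
    · exact hgP
  have hJQ : J ≤ Q := by
    rw [hJdef, Ideal.span_le]
    rintro u (rfl | rfl)
    · exact Ideal.mul_mem_left _ _ hhQ
    · exact hgQ
  have hfhJ : f * h ∈ J := Ideal.subset_span (by simp)
  have hgJ : g ∈ J := Ideal.subset_span (by simp)
  refine ⟨hne, ?_⟩
  ext p
  constructor
  · rintro ⟨⟨hpp, hJp⟩, hpmin⟩
    rcases hpp.mem_or_mem (hJp hfhJ) with hf | hh
    · left
      have hPp : P ≤ p := by
        rw [hPdef, Ideal.span_le]
        rintro u (rfl | rfl)
        · exact hf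
        · exact hJp hgJ
      exact le_antisymm (hpmin ⟨hP, hJP⟩ hPp) hPp
    · right
      have hQp : Q ≤ p := by
        rw [hQdef, Ideal.span_le]
        rintro u (rfl | rfl)
        · exact hh
        · exact hJp hgJ
      exact le_antisymm (hpmin ⟨hQ, hJQ⟩ hQp) hQp
  · rintro (rfl | rfl)
    · refine ⟨⟨hP, hJP⟩, ?_⟩
      rintro y ⟨hyp, hJy⟩ hyP
      rcases hyp.mem_or_mem (hJy hfhJ) with hf | hh
      · rw [hPdef, Ideal.span_le]
        rintro u (rfl | rfl)
        · exact hf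
        · exact hJy hgJ
      · exact absurd (hyP hh) hhP
    · refine ⟨⟨hQ, hJQ⟩, ?_⟩
      rintro y ⟨hyp, hJy⟩ hyQ
      rcases hyp.mem_or_mem (hJy hfhJ) with hf | hh
      · exact absurd (hyQ hf) hfQ
      · rw [hQdef, Ideal.span_le]
        rintro u (rfl | rfl)
        · exact hh
        · exact hJy hgJ
end

section
/- Let A be a commutative ring, let f, g be a regular sequence on A (f is a nonzerodivisor on A, g is a nonzerodivisor on A/(f), and (f,g) ≠ A), let n ≥ 1, and let p be any element of the ideal (ε) of A[ε]/(εⁿ). Then f + p, g is a regular sequence on A[ε]/(εⁿ): f + p is a nonzerodivisor on A[ε]/(εⁿ), g is a nonzerodivisor on A[ε]/(εⁿ, f + p), and the ideal (f + p, g) of A[ε]/(εⁿ) is proper. -/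
open Polynomial

private lemma X_mul_cancel {A : Type*} [CommRing A] {p q : Polynomial A}
    (h : X * p = X * q) : p = q := by
  ext k
  have := congrArg (fun r => Polynomial.coeff r (k + 1)) h
  simp only [coeff_X_mul] at this
  exact this

private lemma key1 {A : Type*} [CommRing A] {f : A} (hf : f ∈ nonZeroDivisors A)
    (Q : Polynomial A) :
    ∀ m (U : Polynomial A), (C f + X * Q) * U ∈ Ideal.span {(X : Polynomial A) ^ m} →
      U ∈ Ideal.span {(X : Polynomial A) ^ m}
  | 0, U, _ => Ideal.mem_span_singleton.2 (by simp)
  | (m + 1), U, h => by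
    rw [Ideal.mem_span_singleton] at h ⊢
    have hX : (X : Polynomial A) ∣ (C f + X * Q) * U :=
      dvd_trans (dvd_pow_self X (Nat.succ_ne_zero m)) h
    rw [X_dvd_iff] at hX
    have hfu : f * U.coeff 0 = 0 := by
      simpa [mul_coeff_zero] using hX
    have hu0 : U.coeff 0 = 0 := hf.2 _ (by rwa [mul_comm] at hfu)
    obtain ⟨U', rfl⟩ := X_dvd_iff.2 hu0
    obtain ⟨W, hW⟩ := h
    have hc : X * ((C f + X * Q) * U') = X * (X ^ m * W) := by
      linear_combination hW
    have h' : (C f + X * Q) * U' ∈ Ideal.span {(X : Polynomial A) ^ m} :=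
      Ideal.mem_span_singleton.2 ⟨W, X_mul_cancel hc⟩
    obtain ⟨U'', hU''⟩ := Ideal.mem_span_singleton.1 (key1 hf Q m U' h')
    exact ⟨U'', by rw [hU'']; ring⟩

private lemma key2 {A : Type*} [CommRing A] {f g : A} (hf : f ∈ nonZeroDivisors A)
    (hg : ∀ a : A, g * a ∈ Ideal.span {f} → a ∈ Ideal.span {f})
    (Q : Polynomial A) :
    ∀ m (U : Polynomial A),
      C g * U ∈ Ideal.span {C f + X * Q, (X : Polynomial A) ^ m} →
      U ∈ Ideal.span {C f + X * Q, (X : Polynomial A) ^ m}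
  | 0, U, _ => by
    have h1 : (1 : Polynomial A) ∈ Ideal.span {C f + X * Q, (X : Polynomial A) ^ 0} :=
      Ideal.subset_span (by simp)
    have : Ideal.span {C f + X * Q, (X : Polynomial A) ^ 0} = ⊤ :=
      Ideal.eq_top_iff_one _ |>.2 h1
    rw [this]; trivial
  | (m + 1), U, h => by
    rw [Ideal.mem_span_pair] at h
    obtain ⟨V, W, hVW⟩ := h
    have hc0 : V.coeff 0 * f = g * U.coeff 0 := by
      have := congrArg (fun r => Polynomial.coeff r 0) hVW
      simpa [mul_coeff_zero, coeff_X_pow] using this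
    have hgu : g * U.coeff 0 ∈ Ideal.span {f} :=
      Ideal.mem_span_singleton.2 ⟨V.coeff 0, by rw [← hc0]; ring⟩
    obtain ⟨a, ha⟩ := Ideal.mem_span_singleton.1 (hg _ hgu)
    have hu1 : (U - C a * (C f + X * Q)).coeff 0 = 0 := by
      simp [mul_coeff_zero, ha, mul_comm]
    obtain ⟨U₂, hU₂⟩ := X_dvd_iff.2 hu1
    have hXU2 : U = C a * (C f + X * Q) + X * U₂ := by linear_combination hU₂
    -- E := V - C g * C a
    have hE : (V - C g * C a) * (C f + X * Q) + W * X ^ (m + 1) = X * (C g * U₂) := by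
      linear_combination hVW + C g * hXU2
    have hE0 : f * (V - C g * C a).coeff 0 = 0 := by
      have := congrArg (fun r => Polynomial.coeff r 0) hE
      simpa [mul_coeff_zero, coeff_X_pow, mul_comm] using this
    have hE0' : (V - C g * C a).coeff 0 = 0 := hf.2 _ (by rwa [mul_comm] at hE0)
    obtain ⟨V₁, hV₁⟩ := X_dvd_iff.2 hE0'
    have hcan : X * (V₁ * (C f + X * Q) + W * X ^ m) = X * (C g * U₂) := by
      linear_combination hE - (C f + X * Q) * hV₁
    have h2 : C g * U₂ ∈ Ideal.span {C f + X * Q, (X : Polynomial A) ^ m} :=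
      Ideal.mem_span_pair.2 ⟨V₁, W, X_mul_cancel hcan⟩
    obtain ⟨V₂, W₂, h₂⟩ := Ideal.mem_span_pair.1 (key2 hf hg Q m U₂ h2)
    exact Ideal.mem_span_pair.2 ⟨C a + X * V₂, W₂, by linear_combination X * h₂ - hXU2⟩

/-- The ring `A[ε]/(εⁿ)`, realized as the quotient of the polynomial ring `A[X]` by the
ideal `(Xⁿ)`. -/
abbrev EpsRing (A : Type*) [CommRing A] (n : ℕ) : Type _ :=
  Polynomial A ⧸ Ideal.span {(Polynomial.X : Polynomial A) ^ n}

/-- The element `ε` of `A[ε]/(εⁿ)`, i.e. the class of `X`. -/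
noncomputable def eps (A : Type*) [CommRing A] (n : ℕ) : EpsRing A n :=
  Ideal.Quotient.mk _ (Polynomial.X : Polynomial A)

/-- Let `A` be a commutative ring, let `f, g` be a regular sequence on `A`, let `n ≥ 1`, and
let `p` be any element of the ideal `(ε)` of `A[ε]/(εⁿ)`. Then `f + p, g` is a regular
sequence on `A[ε]/(εⁿ)`: `f + p` is a nonzerodivisor on `A[ε]/(εⁿ)`, `g` is a nonzerodivisor
on `A[ε]/(εⁿ, f + p)`, and the ideal `(f + p, g)` of `A[ε]/(εⁿ)` is proper. -/
theorem deformation_of_regular_sequence_is_regular_sequence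
    (A : Type*) [CommRing A] (f g : A)
    (hf : f ∈ nonZeroDivisors A)
    (hg : Ideal.Quotient.mk (Ideal.span {f}) g ∈ nonZeroDivisors (A ⧸ Ideal.span {f}))
    (hfg : Ideal.span {f, g} ≠ (⊤ : Ideal A))
    (n : ℕ) (hn : 1 ≤ n)
    (p : EpsRing A n) (hp : p ∈ Ideal.span {eps A n}) :
    algebraMap A (EpsRing A n) f + p ∈ nonZeroDivisors (EpsRing A n) ∧
    Ideal.Quotient.mk (Ideal.span {algebraMap A (EpsRing A n) f + p})
        (algebraMap A (EpsRing A n) g) ∈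
      nonZeroDivisors (EpsRing A n ⧸ Ideal.span {algebraMap A (EpsRing A n) f + p}) ∧
    Ideal.span {algebraMap A (EpsRing A n) f + p, algebraMap A (EpsRing A n) g} ≠
      (⊤ : Ideal (EpsRing A n)) := by
  classical
  set I : Ideal (Polynomial A) := Ideal.span {(X : Polynomial A) ^ n} with hI
  have mk_surj := Ideal.Quotient.mk_surjective (I := I)
  -- p = ε * q with q = mk Q
  obtain ⟨q, hq⟩ := Ideal.mem_span_singleton.1 hp
  obtain ⟨Q, rfl⟩ := mk_surj q
  -- the lift F of f + p
  set F : Polynomial A := C f + X * Q with hFdef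
  have halg : ∀ a : A, algebraMap A (EpsRing A n) a = Ideal.Quotient.mk I (C a) := fun a => rfl
  have hF : Ideal.Quotient.mk I F = algebraMap A (EpsRing A n) f + p := by
    rw [hq, halg, hFdef, map_add, map_mul]; rfl
  -- derived form of hg
  have hg' : ∀ a : A, g * a ∈ Ideal.span {f} → a ∈ Ideal.span {f} := by
    intro a ha
    have h0 : (Ideal.Quotient.mk (Ideal.span {f}) a) * (Ideal.Quotient.mk (Ideal.span {f}) g)
        = 0 := by
      rw [← map_mul, Ideal.Quotient.eq_zero_iff_mem]
      rwa [mul_comm] at ha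
    exact Ideal.Quotient.eq_zero_iff_mem.1 (hg.2 _ h0)
  refine ⟨?_, ?_, ?_⟩
  · -- f + p is a nonzerodivisor
    rw [mem_nonZeroDivisors_iff_right]; intro z hz
    obtain ⟨Z, rfl⟩ := mk_surj z
    rw [← hF, ← map_mul, Ideal.Quotient.eq_zero_iff_mem] at hz
    have : Z ∈ I := key1 hf Q n Z (by rwa [mul_comm] at hz)
    exact Ideal.Quotient.eq_zero_iff_mem.2 this
  · -- g is a nonzerodivisor mod (f + p)
    suffices H : ∀ z, z * Ideal.Quotient.mk (Ideal.span {algebraMap A (EpsRing A n) f + p}) (algebraMap A (EpsRing A n) g) = 0 → z = 0 from ⟨fun z hz => H z (by linear_combination hz), H⟩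
    intro z hz
    obtain ⟨w, rfl⟩ := Ideal.Quotient.mk_surjective
      (I := Ideal.span {algebraMap A (EpsRing A n) f + p}) z
    obtain ⟨Z, rfl⟩ := mk_surj w
    rw [← map_mul, Ideal.Quotient.eq_zero_iff_mem] at hz
    obtain ⟨r, hr⟩ := Ideal.mem_span_singleton.1 hz
    obtain ⟨R, rfl⟩ := mk_surj r
    have hmem : Ideal.Quotient.mk I (Z * C g - F * R) = 0 := by
      rw [map_sub, map_mul, map_mul, hF, ← halg, hr]
      ring
    obtain ⟨S, hS⟩ := Ideal.mem_span_singleton.1 (Ideal.Quotient.eq_zero_iff_mem.1 hmem)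
    have hZg : C g * Z ∈ Ideal.span {F, (X : Polynomial A) ^ n} :=
      Ideal.mem_span_pair.2 ⟨R, S, by linear_combination -hS⟩
    obtain ⟨a, b, hab⟩ := Ideal.mem_span_pair.1 (key2 hf hg' Q n Z hZg)
    have hZJ : Ideal.Quotient.mk I Z ∈
        Ideal.span {algebraMap A (EpsRing A n) f + p} := by
      rw [Ideal.mem_span_singleton]
      refine ⟨Ideal.Quotient.mk I a, ?_⟩
      rw [← hF, ← map_mul, ← sub_eq_zero, ← map_sub, Ideal.Quotient.eq_zero_iff_mem]
      exact Ideal.mem_span_singleton.2 ⟨b, by linear_combination -hab⟩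
    exact Ideal.Quotient.eq_zero_iff_mem.2 hZJ
  · -- properness
    intro htop
    have hn0 : n ≠ 0 := by omega
    have hlift : ∀ a ∈ I, eval (0 : A) a = 0 := by
      intro a ha
      obtain ⟨b, rfl⟩ := Ideal.mem_span_singleton.1 ha
      simp [zero_pow hn0]
    set φ : EpsRing A n →+* A :=
      Ideal.Quotient.lift I (evalRingHom (0 : A)) hlift with hφ
    have hφmk : ∀ Z : Polynomial A, φ (Ideal.Quotient.mk I Z) = eval 0 Z := fun Z => rfl
    have hφf : φ (algebraMap A (EpsRing A n) f + p) = f := by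
      rw [← hF, hφmk, hFdef]; simp
    have hφg : φ (algebraMap A (EpsRing A n) g) = g := by
      rw [halg, hφmk]; simp
    have h1 : (1 : EpsRing A n) ∈
        Ideal.span {algebraMap A (EpsRing A n) f + p, algebraMap A (EpsRing A n) g} := by
      rw [htop]; trivial
    obtain ⟨u, v, huv⟩ := Ideal.mem_span_pair.1 h1
    have : φ u * f + φ v * g = 1 := by
      rw [← hφf, ← hφg, ← map_mul, ← map_mul, ← map_add, huv, map_one]
    exact hfg (Ideal.eq_top_iff_one _ |>.2 (Ideal.mem_span_pair.2 ⟨φ u, φ v, this⟩))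
end

section
/- Let A be a commutative ring, let f, g be a regular sequence on A, let f₁ ∈ A, and set B = A[ε]/(ε²). Then the Koszul complex 0 → B → B ⊕ B → B → B/(f + εf₁, g) → 0, with first map x ↦ (g·x, −(f + εf₁)·x), second map (x, y) ↦ (f + εf₁)·x + g·y, and third map the natural projection, is exact. -/
open Polynomial

section Aux
variable {A : Type*} [CommRing A]

lemma Eps.eps_sq : eps A 2 * eps A 2 = 0 := by
  show Ideal.Quotient.mk _ X * Ideal.Quotient.mk _ X = 0
  rw [← map_mul, Ideal.Quotient.eq_zero_iff_mem, ← sq]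
  exact Ideal.subset_span rfl

lemma Eps.rep (x : EpsRing A 2) :
    ∃ a b : A, x = algebraMap A _ a + eps A 2 * algebraMap A _ b := by
  obtain ⟨p, rfl⟩ := Ideal.Quotient.mk_surjective x
  refine ⟨p.coeff 0, p.coeff 1, ?_⟩
  show Ideal.Quotient.mk _ p =
    Ideal.Quotient.mk _ (C (p.coeff 0)) + Ideal.Quotient.mk _ X * Ideal.Quotient.mk _ (C (p.coeff 1))
  rw [← map_mul, ← map_add, Ideal.Quotient.eq, Ideal.mem_span_singleton]
  refine ⟨p.divX.divX, ?_⟩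
  have h1 := p.divX_mul_X_add
  have h2 := p.divX.divX_mul_X_add
  rw [coeff_divX] at h2
  linear_combination - h1 - X * h2

lemma Eps.zero_iff (a b : A) :
    algebraMap A (EpsRing A 2) a + eps A 2 * algebraMap A _ b = 0 ↔ a = 0 ∧ b = 0 := by
  constructor
  · intro h
    have : Ideal.Quotient.mk (Ideal.span {(X:A[X])^2}) (C a + X * C b) = 0 := by
      rw [map_add, map_mul]; exact h
    rw [Ideal.Quotient.eq_zero_iff_mem, Ideal.mem_span_singleton] at this
    obtain ⟨q, hq⟩ := this
    constructor
    · have := congrArg (fun p => Polynomial.coeff p 0) hq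
      simpa using this
    · have := congrArg (fun p => Polynomial.coeff p 1) hq
      simpa [mul_comm (X^2 : A[X]) q, coeff_mul_X_pow'] using this
  · rintro ⟨rfl, rfl⟩; simp

lemma Eps.mul_rep (a b c d : A) :
    (algebraMap A (EpsRing A 2) a + eps A 2 * algebraMap A _ b) *
      (algebraMap A (EpsRing A 2) c + eps A 2 * algebraMap A _ d) =
    algebraMap A (EpsRing A 2) (a*c) + eps A 2 * algebraMap A _ (a*d + b*c) := by
  simp only [map_mul, map_add]
  linear_combination (algebraMap A (EpsRing A 2) b * algebraMap A (EpsRing A 2) d) *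
    (Eps.eps_sq (A := A))

end Aux


/-- Let `A` be a commutative ring, let `f, g` be a regular sequence on `A`, let `f₁ ∈ A`,
and set `B = A[ε]/(ε²)`. Then the Koszul complex
`0 → B → B ⊕ B → B → B/(f + εf₁, g) → 0`,
with first map `x ↦ (g·x, −(f + εf₁)·x)`, second map `(x, y) ↦ (f + εf₁)·x + g·y`, and third
map the natural projection, is exact. -/
theorem koszul_complex_of_first_order_deformation_exact
    (A : Type*) [CommRing A] (f g f₁ : A)
    (hf : f ∈ nonZeroDivisors A)
    (hg : Ideal.Quotient.mk (Ideal.span {f}) g ∈ nonZeroDivisors (A ⧸ Ideal.span {f}))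
    (hfg : Ideal.span {f, g} ≠ (⊤ : Ideal A)) :
    Function.Injective
      (fun x : EpsRing A 2 =>
        ((algebraMap A (EpsRing A 2) g * x,
          -((algebraMap A (EpsRing A 2) f + eps A 2 * algebraMap A (EpsRing A 2) f₁) * x)) :
          EpsRing A 2 × EpsRing A 2)) ∧
    Function.Exact
      (fun x : EpsRing A 2 =>
        ((algebraMap A (EpsRing A 2) g * x,
          -((algebraMap A (EpsRing A 2) f + eps A 2 * algebraMap A (EpsRing A 2) f₁) * x)) :
          EpsRing A 2 × EpsRing A 2))
      (fun q : EpsRing A 2 × EpsRing A 2 =>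
        (algebraMap A (EpsRing A 2) f + eps A 2 * algebraMap A (EpsRing A 2) f₁) * q.1 +
          algebraMap A (EpsRing A 2) g * q.2) ∧
    Function.Exact
      (fun q : EpsRing A 2 × EpsRing A 2 =>
        (algebraMap A (EpsRing A 2) f + eps A 2 * algebraMap A (EpsRing A 2) f₁) * q.1 +
          algebraMap A (EpsRing A 2) g * q.2)
      (Ideal.Quotient.mk (Ideal.span
        {algebraMap A (EpsRing A 2) f + eps A 2 * algebraMap A (EpsRing A 2) f₁,
         algebraMap A (EpsRing A 2) g})) ∧
    Function.Surjective
      (Ideal.Quotient.mk (Ideal.span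
        {algebraMap A (EpsRing A 2) f + eps A 2 * algebraMap A (EpsRing A 2) f₁,
         algebraMap A (EpsRing A 2) g})) := by
  -- A-level consequences of regularity
  have hfA : ∀ a : A, f * a = 0 → a = 0 := fun a h => hf.2 a (by rwa [mul_comm] at h)
  have hgA : ∀ a : A, (∃ c, g * a = f * c) → ∃ a', a = f * a' := by
    rintro a ⟨c, hc⟩
    have h0 : Ideal.Quotient.mk (Ideal.span {f}) a * Ideal.Quotient.mk (Ideal.span {f}) g = 0 := by
      rw [← map_mul, Ideal.Quotient.eq_zero_iff_mem, Ideal.mem_span_singleton, mul_comm]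
      exact ⟨c, hc⟩
    have := hg.2 _ h0
    rw [Ideal.Quotient.eq_zero_iff_mem, Ideal.mem_span_singleton] at this
    exact this
  -- g is a nonzerodivisor mod (f + ε f₁), expressed at the level of A
  have hkey : ∀ a b c d : A, g * a = f * c → g * b = f * d + f₁ * c →
      ∃ a' b', a = f * a' ∧ b = f * b' + f₁ * a' := by
    intro a b c d h1 h2
    obtain ⟨a', ha'⟩ := hgA a ⟨c, h1⟩
    have hc : c = g * a' := by
      have h0 : f * (c - g * a') = 0 := by linear_combination -h1 + g * ha'
      have := hfA _ h0
      linear_combination this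
    obtain ⟨b', hb'⟩ := hgA (b - f₁ * a') ⟨d, by linear_combination h2 + f₁ * hc⟩
    exact ⟨a', b', ha', by linear_combination hb'⟩
  -- F = f + ε f₁ is a nonzerodivisor on B
  have hFnzd : ∀ x : EpsRing A 2,
      (algebraMap A (EpsRing A 2) f + eps A 2 * algebraMap A (EpsRing A 2) f₁) * x = 0 →
      x = 0 := by
    intro x hx
    obtain ⟨a, b, rfl⟩ := Eps.rep x
    rw [Eps.mul_rep] at hx
    obtain ⟨h1, h2⟩ := (Eps.zero_iff _ _).mp hx
    have ha : a = 0 := hfA a h1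
    have hb : b = 0 := hfA b (by rw [ha] at h2; linear_combination h2)
    rw [ha, hb]; simp
  refine ⟨?_, ?_, ?_, Ideal.Quotient.mk_surjective⟩
  · -- injectivity
    intro x y hxy
    have h1 : (algebraMap A (EpsRing A 2) f + eps A 2 * algebraMap A (EpsRing A 2) f₁) * x =
        (algebraMap A (EpsRing A 2) f + eps A 2 * algebraMap A (EpsRing A 2) f₁) * y := by
      have := congrArg Prod.snd hxy
      simpa using this
    have h0 : (algebraMap A (EpsRing A 2) f + eps A 2 * algebraMap A (EpsRing A 2) f₁) *
        (x - y) = 0 := by rw [mul_sub, h1, sub_self]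
    exact sub_eq_zero.mp (hFnzd _ h0)
  · -- middle exactness
    intro q
    constructor
    · intro hq
      obtain ⟨x, y⟩ := q
      simp only at hq
      obtain ⟨x₁, x₂, rfl⟩ := Eps.rep x
      obtain ⟨y₁, y₂, rfl⟩ := Eps.rep y
      have hgy : algebraMap A (EpsRing A 2) g *
          (algebraMap A (EpsRing A 2) y₁ + eps A 2 * algebraMap A (EpsRing A 2) y₂) =
          algebraMap A (EpsRing A 2) (g * y₁) + eps A 2 * algebraMap A (EpsRing A 2) (g * y₂) := by
        have := Eps.mul_rep (A := A) g 0 y₁ y₂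
        simpa using this
      rw [Eps.mul_rep, hgy] at hq
      have hq' : algebraMap A (EpsRing A 2) (f * x₁ + g * y₁) +
          eps A 2 * algebraMap A (EpsRing A 2) ((f * x₂ + f₁ * x₁) + g * y₂) = 0 := by
        simp only [map_add] at hq ⊢
        linear_combination hq
      obtain ⟨h1, h2⟩ := (Eps.zero_iff _ _).mp hq'
      obtain ⟨w₁, w₂, hw1, hw2⟩ := hkey y₁ y₂ (-x₁) (-x₂)
        (by linear_combination h1) (by linear_combination h2)
      have hx1 : x₁ = -(g * w₁) := by
        apply eq_neg_of_add_eq_zero_left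
        apply hfA
        linear_combination h1 - g * hw1
      have hx2 : x₂ = -(g * w₂) := by
        apply eq_neg_of_add_eq_zero_left
        apply hfA
        linear_combination h2 - g * hw2 - f₁ * hx1
      refine ⟨algebraMap A (EpsRing A 2) (-w₁) + eps A 2 * algebraMap A (EpsRing A 2) (-w₂), ?_⟩
      simp only [Prod.mk.injEq]
      constructor
      · rw [hx1, hx2]
        simp only [map_neg, map_mul]
        ring
      · rw [hw1, hw2]
        simp only [map_neg, map_add, map_mul]
        linear_combination (algebraMap A (EpsRing A 2) f₁ * algebraMap A (EpsRing A 2) w₂) *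
          (Eps.eps_sq (A := A))
    · rintro ⟨z, rfl⟩
      simp only
      ring
  · -- exactness at the last spot
    intro z
    rw [Ideal.Quotient.eq_zero_iff_mem, Ideal.mem_span_pair]
    constructor
    · rintro ⟨a, b, h⟩
      exact ⟨(a, b), by simpa [mul_comm] using h⟩
    · rintro ⟨⟨a, b⟩, rfl⟩
      exact ⟨a, b, by simp [mul_comm]⟩
end
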